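/- Let f be convex on W = conv(S) with curvature at most M, let w* minimize f over W, and suppose w_{k+1} = (1-η_k)w_k + η_k d_k where d_k ∈ S satisfies f((1-η_k)w_k + η_k d_k) ≤ min_{d∈S} f((1-η_k)w_k + η_k d) + ε_k η_k. Then f(w_{k+1}) - f(w*) ≤ (1-η_k)(f(w_k) - f(w*)) + η_k ε_k + (M/2)η_k². -/

import Mathlib

open RealInnerProductSpace

theorem stmt_6 (n : ℕ) (M : ℝ) (S : Set (EuclideanSpace ℝ (Fin n))) (hS : IsCompact S)
    (W : Set (EuclideanSpace ℝ (Fin n))) (hW : W = convexHull ℝ S)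
    (f : EuclideanSpace ℝ (Fin n) → ℝ) (g : EuclideanSpace ℝ (Fin n) → EuclideanSpace ℝ (Fin n))
    (hf : ConvexOn ℝ W f)
    (hg : ∀ x ∈ W, HasGradientAt f (g x) x)
    (hcurv : ∀ w ∈ W, ∀ d ∈ S, ∀ η ∈ Set.Icc (0 : ℝ) 1,
      f ((1 - η) • w + η • d) ≤ f w + η * ⟪g w, d - w⟫ + (M / 2) * η ^ 2)
    (wstar : EuclideanSpace ℝ (Fin n)) (hws : wstar ∈ W) (hmin : ∀ x ∈ W, f wstar ≤ f x)
    (ηk εk : ℝ) (hηk : ηk ∈ Set.Icc (0 : ℝ) 1) (hεk : 0 ≤ εk)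
    (wk dk : EuclideanSpace ℝ (Fin n)) (hwk : wk ∈ W) (hdk : dk ∈ S)
    (happrox : ∀ d ∈ S, f ((1 - ηk) • wk + ηk • dk) ≤ f ((1 - ηk) • wk + ηk • d) + εk * ηk) :
    f ((1 - ηk) • wk + ηk • dk) - f wstar
      ≤ (1 - ηk) * (f wk - f wstar) + ηk * εk + (M / 2) * ηk ^ 2 := by
  obtain ⟨hη0, hη1⟩ := hηk
  -- S is nonempty
  have hSne : S.Nonempty := by
    rw [← convexHull_nonempty_iff (𝕜 := ℝ)]
    exact ⟨wstar, hW ▸ hws⟩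
  -- minimizer of the linear function over S
  have hcont : ContinuousOn (fun x => ⟪g wk, x⟫) S :=
    (continuous_const.inner continuous_id).continuousOn
  obtain ⟨d₀, hd₀S, hd₀min⟩ := hS.exists_isMinOn hSne hcont
  -- the linear minimum over S is ≤ value at wstar (which is in conv S)
  have hlinstar : ⟪g wk, d₀⟫ ≤ ⟪g wk, wstar⟫ := by
    have hconv : Convex ℝ {x : EuclideanSpace ℝ (Fin n) | ⟪g wk, d₀⟫ ≤ ⟪g wk, x⟫} :=
      convex_halfSpace_ge ⟨fun x y => inner_add_right _ _ _, fun c x => real_inner_smul_right _ _ _⟩ _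
    have hsub : S ⊆ {x | ⟪g wk, d₀⟫ ≤ ⟪g wk, x⟫} := fun x hx => hd₀min hx
    have := convexHull_min hsub hconv (hW ▸ hws)
    exact this
  -- gradient inequality: ⟪g wk, wstar - wk⟫ ≤ f wstar - f wk
  have hgrad : ⟪g wk, wstar - wk⟫ ≤ f wstar - f wk := by
    set v := wstar - wk with hv
    have hderiv : HasDerivAt (fun t : ℝ => f (wk + t • v)) ⟪g wk, v⟫ 0 := by
      have hL : HasDerivAt (fun t : ℝ => wk + t • v) v 0 := by
        simpa using ((hasDerivAt_id (0:ℝ)).smul_const v).const_add wk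
      have hF : HasFDerivAt f ((InnerProductSpace.toDual ℝ _) (g wk) :
          EuclideanSpace ℝ (Fin n) →L[ℝ] ℝ) (wk + (0:ℝ) • v) := by
        simpa using (hg wk hwk).hasFDerivAt
      have h2 := hF.comp_hasDerivAt 0 hL
      simp [real_inner_comm] at h2
      exact h2
    have hslope : Filter.Tendsto (slope (fun t : ℝ => f (wk + t • v)) 0)
        (nhdsWithin 0 {(0:ℝ)}ᶜ) (nhds ⟪g wk, v⟫) :=
      hasDerivAt_iff_tendsto_slope.mp hderiv
    have hslope' : Filter.Tendsto (slope (fun t : ℝ => f (wk + t • v)) 0)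
        (nhdsWithin 0 (Set.Ioi 0)) (nhds ⟪g wk, v⟫) :=
      hslope.mono_left (nhdsWithin_mono 0 (fun t ht => ne_of_gt ht))
    refine le_of_tendsto hslope' ?_
    filter_upwards [Ioo_mem_nhdsGT_of_mem (Set.mem_Ico.mpr ⟨le_refl (0:ℝ), one_pos⟩)]
      with t ht
    obtain ⟨ht0, ht1⟩ := ht
    have hmem : wk + t • v = (1 - t) • wk + t • wstar := by
      rw [hv]; module
    have hfle : f (wk + t • v) ≤ (1 - t) * f wk + t * f wstar := by
      rw [hmem]
      exact hf.2 hwk hws (by linarith) (le_of_lt ht0) (by ring)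
    rw [slope_def_field]
    simp only [zero_smul, add_zero, sub_zero]
    rw [div_le_iff₀ ht0]
    nlinarith [hfle]
  -- curvature bound with d₀
  have hcurv₀ := hcurv wk hwk d₀ hd₀S ηk ⟨hη0, hη1⟩
  -- approximation bound
  have happ₀ := happrox d₀ hd₀S
  have hinner : ⟪g wk, d₀ - wk⟫ ≤ ⟪g wk, wstar - wk⟫ := by
    rw [inner_sub_right, inner_sub_right]
    linarith
  nlinarith [hgrad, hinner, hη0]
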